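/- An m×m matrix A over the complex zeon algebra is nilpotent if and only if its scalar-part matrix CA is nilpotent. -/

import Mathlib

open scoped BigOperators

noncomputable section

/-- The ideal of squares of generators in the polynomial ring. -/
def zeonIdeal (n : ℕ) : Ideal (MvPolynomial (Fin n) ℂ) :=
  Ideal.span {p : MvPolynomial (Fin n) ℂ | ∃ i : Fin n, p = MvPolynomial.X i ^ 2}

/-- The `n`-particle complex zeon algebra. -/
abbrev Zeon (n : ℕ) := MvPolynomial (Fin n) ℂ ⧸ zeonIdeal n

/-- The zeon generators. -/
def zeta (n : ℕ) (i : Fin n) : Zeon n := Ideal.Quotient.mk _ (MvPolynomial.X i)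

/-- Basis blades. -/
def zetaBlade (n : ℕ) (I : Finset (Fin n)) : Zeon n := ∏ i ∈ I, zeta n i

/-- Scalar part map. -/
def scalarPart (n : ℕ) : Zeon n →+* ℂ :=
  Ideal.Quotient.lift _ (MvPolynomial.aeval (fun _ : Fin n => (0:ℂ))).toRingHom
    (fun a ha => by
      have h : zeonIdeal n ≤
          RingHom.ker (MvPolynomial.aeval (fun _ : Fin n => (0:ℂ))).toRingHom := by
        rw [zeonIdeal, Ideal.span_le]
        rintro p ⟨i, rfl⟩
        simp [RingHom.mem_ker]
      exact h ha)

/-- Dual (nilpotent) part. -/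
def dualPart (n : ℕ) (u : Zeon n) : Zeon n := u - algebraMap ℂ (Zeon n) (scalarPart n u)

/-- Conjugation on zeons: conjugate the complex coefficients, fix the generators. -/
def zconj (n : ℕ) : Zeon n →+* Zeon n :=
  Ideal.Quotient.lift _
    ((Ideal.Quotient.mk (zeonIdeal n)).comp (MvPolynomial.map (starRingEnd ℂ)))
    (fun a ha => by
      have h : zeonIdeal n ≤ RingHom.ker
          ((Ideal.Quotient.mk (zeonIdeal n)).comp (MvPolynomial.map (starRingEnd ℂ))) := by
        rw [zeonIdeal, Ideal.span_le]
        rintro p ⟨i, rfl⟩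
        simp only [Set.mem_setOf_eq, SetLike.mem_coe, RingHom.mem_ker, RingHom.comp_apply,
          map_pow, MvPolynomial.map_X]
        rw [← map_pow, Ideal.Quotient.eq_zero_iff_mem]
        exact Ideal.subset_span ⟨i, rfl⟩
      exact h ha)

open MvPolynomial in
def Xideal (n : ℕ) : Ideal (MvPolynomial (Fin n) ℂ) :=
  Ideal.span (Set.range (MvPolynomial.X : Fin n → MvPolynomial (Fin n) ℂ))

open MvPolynomial in
lemma deg_of_mem_pow (n k : ℕ) (x : MvPolynomial (Fin n) ℂ) (hx : x ∈ Xideal n ^ k) :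
    ∀ d ∈ x.support, k ≤ d.sum fun _ e => e := by
  induction k generalizing x with
  | zero => intro d _; exact Nat.zero_le _
  | succ k ih =>
    rw [pow_succ] at hx
    refine Submodule.mul_induction_on hx ?_ ?_
    · intro a ha b hb d hd
      classical
      have hsub := MvPolynomial.support_mul a b hd
      rw [Finset.mem_add] at hsub
      obtain ⟨d1, hd1, d2, hd2, rfl⟩ := hsub
      have h1 : k ≤ d1.sum fun _ e => e := ih a ha d1 hd1
      have hb0 : constantCoeff b = 0 := by
        have : Xideal n ≤ RingHom.ker (constantCoeff : MvPolynomial (Fin n) ℂ →+* ℂ) := by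
          rw [Xideal, Ideal.span_le]
          rintro p ⟨i, rfl⟩
          simp [RingHom.mem_ker]
        exact this hb
      have hd2ne : d2 ≠ 0 := by
        rintro rfl
        exact (MvPolynomial.mem_support_iff.mp hd2) hb0
      have h2 : 1 ≤ d2.sum fun _ e => e := by
        rcases Finsupp.ne_iff.mp hd2ne with ⟨i, hi⟩
        simp only [Finsupp.coe_zero, Pi.zero_apply] at hi
        have hmem : i ∈ d2.support := Finsupp.mem_support_iff.mpr hi
        calc 1 ≤ d2 i := Nat.one_le_iff_ne_zero.mpr hi
          _ ≤ ∑ j ∈ d2.support, d2 j :=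
            Finset.single_le_sum (fun j _ => Nat.zero_le _) hmem
          _ = d2.sum fun _ e => e := rfl
      have : (d1 + d2).sum (fun _ e => e) = (d1.sum fun _ e => e) + d2.sum fun _ e => e :=
        Finsupp.sum_add_index' (fun _ => rfl) (fun _ _ _ => rfl)
      omega
    · intro a b ha hb d hd
      classical
      have := MvPolynomial.support_add (p := a) (q := b) hd
      rw [Finset.mem_union] at this
      rcases this with h | h
      · exact ha d h
      · exact hb d h

open MvPolynomial in
lemma Xideal_pow_le (n : ℕ) : Xideal n ^ (n + 1) ≤ zeonIdeal n := by
  intro x hx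
  have hdeg := deg_of_mem_pow n (n+1) x hx
  have hset : {p : MvPolynomial (Fin n) ℂ | ∃ i : Fin n, p = MvPolynomial.X i ^ 2} =
      (fun s => monomial s (1 : ℂ)) '' (Set.range fun i : Fin n => Finsupp.single i 2) := by
    ext p
    simp only [Set.mem_setOf_eq, Set.mem_image, Set.mem_range]
    constructor
    · rintro ⟨i, rfl⟩; exact ⟨Finsupp.single i 2, ⟨i, rfl⟩, X_pow_eq_monomial.symm⟩
    · rintro ⟨_, ⟨i, rfl⟩, rfl⟩; exact ⟨i, X_pow_eq_monomial.symm⟩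
  rw [zeonIdeal, hset, mem_ideal_span_monomial_image]
  intro d hd
  have hsum := hdeg d hd
  -- pigeonhole: some i with d i ≥ 2
  by_contra hcon
  push_neg at hcon
  have hle : ∀ i, d i ≤ 1 := by
    intro i
    by_contra h
    push_neg at h
    exact absurd (Finsupp.single_le_iff.mpr h) (by
      have := hcon (Finsupp.single i 2) ⟨i, rfl⟩
      exact this)
  have : d.sum (fun _ e => e) ≤ n := by
    calc d.sum (fun _ e => e) = ∑ i ∈ d.support, d i := rfl
      _ ≤ ∑ _i ∈ d.support, 1 := Finset.sum_le_sum fun i _ => hle i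
      _ = d.support.card := by simp
      _ ≤ Fintype.card (Fin n) := Finset.card_le_card (Finset.subset_univ _)
      _ = n := Fintype.card_fin n
  omega

lemma ker_le_map (n : ℕ) :
    RingHom.ker (scalarPart n) ≤ Ideal.map (Ideal.Quotient.mk (zeonIdeal n)) (Xideal n) := by
  intro u hu
  obtain ⟨p, rfl⟩ := Ideal.Quotient.mk_surjective u
  have hp : MvPolynomial.aeval (fun _ : Fin n => (0:ℂ)) p = 0 := hu
  have hp0 : MvPolynomial.constantCoeff p = 0 := by
    rwa [MvPolynomial.aeval_zero'] at hp
  have hpI : p ∈ Xideal n := by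
    rw [Xideal, ← Set.image_univ, MvPolynomial.mem_ideal_span_X_image]
    intro d hd
    have hdne : d ≠ 0 := by
      rintro rfl
      exact (MvPolynomial.mem_support_iff.mp hd) hp0
    rcases Finsupp.ne_iff.mp hdne with ⟨i, hi⟩
    exact ⟨i, Set.mem_univ i, by simpa using hi⟩
  exact Ideal.mem_map_of_mem _ hpI

set_option synthInstance.maxHeartbeats 400000 in
lemma ker_pow_eq_bot (n : ℕ) : (RingHom.ker (scalarPart n)) ^ (n + 1) = ⊥ := by
  have h1 : (RingHom.ker (scalarPart n)) ^ (n+1) ≤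
      (Ideal.map (Ideal.Quotient.mk (zeonIdeal n)) (Xideal n)) ^ (n+1) :=
    Ideal.pow_right_mono (ker_le_map n) _
  have h2 : (Ideal.map (Ideal.Quotient.mk (zeonIdeal n)) (Xideal n)) ^ (n+1) =
      Ideal.map (Ideal.Quotient.mk (zeonIdeal n)) (Xideal n ^ (n+1)) :=
    (Ideal.map_pow _ _ _).symm
  have h3 : Ideal.map (Ideal.Quotient.mk (zeonIdeal n)) (Xideal n ^ (n+1)) ≤
      Ideal.map (Ideal.Quotient.mk (zeonIdeal n)) (zeonIdeal n) :=
    Ideal.map_mono (Xideal_pow_le n)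
  rw [Ideal.map_quotient_self] at h3
  exact le_bot_iff.mp (h1.trans (h2 ▸ h3))


end
/-- a zeon matrix is nilpotent iff its scalar-part matrix is
nilpotent. -/
theorem zeon_matrix_nilpotent_iff (n m : ℕ) (A : Matrix (Fin m) (Fin m) (Zeon n)) :
    IsNilpotent A ↔ IsNilpotent (A.map (scalarPart n)) := by
  constructor
  · rintro ⟨k, hk⟩
    refine ⟨k, ?_⟩
    have : A.map (scalarPart n) = (scalarPart n).mapMatrix A := rfl
    rw [this, ← map_pow, hk, map_zero]
  · rintro ⟨k, hk⟩
    refine ⟨k * (n + 1), ?_⟩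
    rw [pow_mul]
    set B := A ^ k with hB
    have hBker : ∀ i j, B i j ∈ RingHom.ker (scalarPart n) := by
      intro i j
      have : (scalarPart n).mapMatrix B = 0 := by
        rw [hB, map_pow]
        have : (scalarPart n).mapMatrix A = A.map (scalarPart n) := rfl
        rw [this, hk]
      have := congrFun (congrFun (congrArg (fun M => (M : Matrix (Fin m) (Fin m) ℂ)) this) i) j
      simpa [RingHom.mem_ker, RingHom.mapMatrix_apply, Matrix.map_apply] using this
    have key : ∀ l, ∀ i j, (B ^ l) i j ∈ (RingHom.ker (scalarPart n)) ^ l := by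
      intro l
      induction l with
      | zero => intro i j; simp
      | succ l ih =>
        intro i j
        rw [show B^(l+1) = B^l * B from pow_succ B l, Matrix.mul_apply, pow_succ]
        exact Ideal.sum_mem _ fun c _ => Ideal.mul_mem_mul (ih i c) (hBker c j)
    ext i j
    have := key (n+1) i j
    rw [ker_pow_eq_bot n, Ideal.mem_bot] at this
    simp [this]
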